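/- Let ξ be a real random variable and define m_-(t) = E min(t_1, t) for a positive random variable t_1 and N(t) = max{n ≥ 0 : T_n ≤ t} the renewal counting process of i.i.d. positive (t_i) with partial sums T_n. Then for every x > 0, x / m_-(x) ≤ E N(x) + 1 ≤ 2x / m_-(x). -/

import Mathlib

open MeasureTheory ProbabilityTheory
open scoped ENNReal

lemma stmt16_aux (x : ℝ) (hx : 0 < x) (u : ℕ → ℝ) (hu : ∀ i, 0 < u i)
    (Tr : ℕ → ℝ) (hT : ∀ n, Tr n = ∑ i ∈ Finset.Icc 1 n, u i) :
    (∑' n : ℕ, if Tr n ≤ x then ENNReal.ofReal (min (u (n+1)) x) else 0)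
      ≤ ENNReal.ofReal (2*x) ∧
    ((∃ n, x < Tr n) →
      ENNReal.ofReal x ≤ ∑' n : ℕ, if Tr n ≤ x then ENNReal.ofReal (min (u (n+1)) x) else 0) := by
  have h0 : Tr 0 = 0 := by rw [hT]; simp
  have hsucc : ∀ n, Tr (n+1) = Tr n + u (n+1) := by
    intro n
    rw [hT, hT, Finset.sum_Icc_succ_top (Nat.le_add_left 1 n)]
  have hmono : Monotone Tr := monotone_nat_of_le_succ fun n => by
    rw [hsucc]; linarith [hu (n+1)]
  have hnn : ∀ n, 0 ≤ Tr n := fun n => h0 ▸ hmono (Nat.zero_le n)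
  have hule : ∀ k n, k + 1 ≤ n → u (k+1) ≤ Tr n := fun k n h =>
    le_trans (by rw [hsucc]; linarith [hnn k]) (hmono h)
  have hsumr : ∀ N, ∑ n ∈ Finset.range N, u (n+1) = Tr N := by
    intro N
    induction N with
    | zero => simp [h0]
    | succ n ih => rw [Finset.sum_range_succ, ih, hsucc]
  set f : ℕ → ℝ≥0∞ := fun n => if Tr n ≤ x then ENNReal.ofReal (min (u (n+1)) x) else 0 with hf
  constructor
  · by_cases hall : ∀ n, Tr n ≤ x
    · have hfn : ∀ n, f n = ENNReal.ofReal (u (n+1)) := by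
        intro n
        simp only [hf, if_pos (hall n)]
        rw [min_eq_left (le_trans (hule n (n+1) le_rfl) (hall (n+1)))]
      have : ∑' n, f n ≤ ENNReal.ofReal x := by
        apply ENNReal.tsum_le_of_sum_range_le
        intro N
        calc ∑ n ∈ Finset.range N, f n
            = ENNReal.ofReal (∑ n ∈ Finset.range N, u (n+1)) := by
              rw [ENNReal.ofReal_sum_of_nonneg (fun i _ => (hu (i+1)).le)]
              exact Finset.sum_congr rfl fun i _ => hfn i
          _ ≤ ENNReal.ofReal x := by
              rw [hsumr]; exact ENNReal.ofReal_le_ofReal (hall N)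
      refine this.trans (ENNReal.ofReal_le_ofReal (by linarith))
    · push_neg at hall
      set M := Nat.find hall with hM
      have hMx : x < Tr M := Nat.find_spec hall
      have hlt : ∀ k, k < M → Tr k ≤ x := fun k hk => le_of_not_gt (Nat.find_min hall hk)
      have hM0 : M ≠ 0 := by intro h; rw [h, h0] at hMx; linarith
      obtain ⟨K, hK⟩ := Nat.exists_eq_succ_of_ne_zero hM0
      have hzero : ∀ n ∉ Finset.range (K+1), f n = 0 := by
        intro n hn
        simp only [Finset.mem_range, not_lt] at hn
        have : x < Tr n := lt_of_lt_of_le hMx (hmono (hK ▸ hn))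
        simp [hf, not_le.mpr this]
      rw [tsum_eq_sum hzero, Finset.sum_range_succ]
      have h1 : ∑ n ∈ Finset.range K, f n ≤ ENNReal.ofReal x := by
        calc ∑ n ∈ Finset.range K, f n
            ≤ ∑ n ∈ Finset.range K, ENNReal.ofReal (u (n+1)) := by
              apply Finset.sum_le_sum
              intro i _
              simp only [hf]
              split
              · exact ENNReal.ofReal_le_ofReal (min_le_left _ _)
              · exact zero_le
          _ = ENNReal.ofReal (Tr K) := by
              rw [← hsumr K, ENNReal.ofReal_sum_of_nonneg (fun i _ => (hu (i+1)).le)]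
          _ ≤ ENNReal.ofReal x :=
              ENNReal.ofReal_le_ofReal (hlt K (by omega))
      have h2 : f K ≤ ENNReal.ofReal x := by
        simp only [hf]
        split
        · exact ENNReal.ofReal_le_ofReal (min_le_right _ _)
        · exact zero_le
      calc ∑ n ∈ Finset.range K, f n + f K ≤ ENNReal.ofReal x + ENNReal.ofReal x :=
            add_le_add h1 h2
        _ = ENNReal.ofReal (2*x) := by rw [← ENNReal.ofReal_add hx.le hx.le]; ring_nf
  · intro h
    set M := Nat.find h with hM
    have hMx : x < Tr M := Nat.find_spec h
    have hlt : ∀ k, k < M → Tr k ≤ x := fun k hk => le_of_not_gt (Nat.find_min h hk)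
    have hM0 : M ≠ 0 := by intro hh; rw [hh, h0] at hMx; linarith
    obtain ⟨K, hK⟩ := Nat.exists_eq_succ_of_ne_zero hM0
    have hKM : K < M := by omega
    have hfK : ∀ n ∈ Finset.range (K+1), f n = ENNReal.ofReal (min (u (n+1)) x) := by
      intro n hn
      simp only [Finset.mem_range] at hn
      simp [hf, if_pos (hlt n (by omega))]
    have key : x ≤ ∑ n ∈ Finset.range (K+1), min (u (n+1)) x := by
      rw [Finset.sum_range_succ]
      rcases le_or_gt x (u (K+1)) with hc | hc
      · have : min (u (K+1)) x = x := min_eq_right hc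
        have hnn' : (0:ℝ) ≤ ∑ n ∈ Finset.range K, min (u (n+1)) x :=
          Finset.sum_nonneg fun i _ => le_min (hu (i+1)).le hx.le
        linarith
      · have hmin : ∀ n < K, min (u (n+1)) x = u (n+1) := by
          intro n hn
          exact min_eq_left (le_trans (hule n K (by omega)) (hlt K hKM))
        have : ∑ n ∈ Finset.range K, min (u (n+1)) x = Tr K := by
          rw [← hsumr]
          exact Finset.sum_congr rfl fun i hi => hmin i (Finset.mem_range.mp hi)
        rw [this, min_eq_left hc.le]
        have : Tr K + u (K+1) = Tr (K+1) := (hsucc K).symm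
        rw [this]
        exact le_of_lt (by simpa [hK] using hMx)
    calc ENNReal.ofReal x
        ≤ ENNReal.ofReal (∑ n ∈ Finset.range (K+1), min (u (n+1)) x) :=
          ENNReal.ofReal_le_ofReal key
      _ = ∑ n ∈ Finset.range (K+1), ENNReal.ofReal (min (u (n+1)) x) :=
          ENNReal.ofReal_sum_of_nonneg fun i _ => le_min (hu (i+1)).le hx.le
      _ = ∑ n ∈ Finset.range (K+1), f n := (Finset.sum_congr rfl hfK).symm
      _ ≤ ∑' n, f n := ENNReal.sum_le_tsum _
set_option maxHeartbeats 1000000 in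
theorem stmt16 {Ω : Type*} [MeasurableSpace Ω] (μ : Measure Ω) [IsProbabilityMeasure μ]
    (t : ℕ → Ω → ℝ) (hmeas : ∀ n, Measurable (t n))
    (hindep : iIndepFun t μ)
    (hident : ∀ n, IdentDistrib (t n) (t 1) μ μ)
    (hpos : ∀ n, ∀ᵐ ω ∂μ, 0 < t n ω)
    (T : ℕ → Ω → ℝ) (hT : ∀ n ω, T n ω = ∑ i ∈ Finset.Icc 1 n, t i ω)
    (m : ℝ → ℝ) (hm : ∀ z, m z = ∫ ω, min (t 1 ω) z ∂μ)
    (x : ℝ) (hx : 0 < x) :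
    ENNReal.ofReal (x / m x) ≤ (∑' n : ℕ, μ {ω | T (n + 1) ω ≤ x}) + 1 ∧
    (∑' n : ℕ, μ {ω | T (n + 1) ω ≤ x}) + 1 ≤ ENNReal.ofReal (2 * x / m x) := by
  -- basic measurability
  have hTfun : ∀ n, T n = ∑ i ∈ Finset.Icc 1 n, t i := by
    intro n; funext ω; rw [hT]; simp [Finset.sum_apply]
  have hTmeas : ∀ n, Measurable (T n) := by
    intro n
    have : T n = fun ω => ∑ i ∈ Finset.Icc 1 n, t i ω := funext (hT n)
    rw [this]
    exact Finset.measurable_sum _ fun i _ => hmeas i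
  set A : ℕ → Set Ω := fun n => {ω | T n ω ≤ x} with hA
  have hAmeas : ∀ n, MeasurableSet (A n) := fun n => measurableSet_le (hTmeas n) measurable_const
  have hpos' : ∀ᵐ ω ∂μ, ∀ i, 0 < t i ω := (ae_all_iff).2 hpos
  -- the truncation function
  set g : ℝ → ℝ≥0∞ := fun y => ENNReal.ofReal (min y x) with hg
  have hgmeas : Measurable g := (measurable_id.min measurable_const).ennreal_ofReal
  -- integrability and positivity of m x
  have hminnn : ∀ᵐ ω ∂μ, 0 ≤ min (t 1 ω) x := (hpos 1).mono fun ω h => le_min h.le hx.le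
  have hint : Integrable (fun ω => min (t 1 ω) x) μ := by
    refine Integrable.mono' (integrable_const x) ((hmeas 1).min measurable_const).aestronglyMeasurable ?_
    filter_upwards [hpos 1] with ω h
    rw [Real.norm_eq_abs, abs_of_nonneg (le_min h.le hx.le)]
    exact min_le_right _ _
  have hmx_pos : 0 < m x := by
    rw [hm]
    rw [integral_pos_iff_support_of_nonneg_ae hminnn hint]
    have hS : ∀ᵐ ω ∂μ, ω ∈ Function.support fun ω => min (t 1 ω) x := by
      filter_upwards [hpos 1] with ω h
      exact ne_of_gt (lt_min h hx)
    calc (0:ℝ≥0∞) < 1 := zero_lt_one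
      _ = μ {ω | ω ∈ Function.support fun ω => min (t 1 ω) x} := by
          rw [measure_congr (Filter.eventuallyEq_univ.2 hS : _ =ᵐ[μ] Set.univ)]
          simp
      _ ≤ μ (Function.support fun ω => min (t 1 ω) x) := le_refl _
  -- lintegral of truncated variable
  have hlg1 : ∫⁻ ω, g (t 1 ω) ∂μ = ENNReal.ofReal (m x) := by
    rw [hm]
    exact (ofReal_integral_eq_lintegral_ofReal hint hminnn).symm
  have hlg : ∀ n, ∫⁻ ω, g (t (n+1) ω) ∂μ = ENNReal.ofReal (m x) := by
    intro n
    rw [← lintegral_map hgmeas (hmeas (n+1)), (hident (n+1)).map_eq,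
      lintegral_map hgmeas (hmeas 1), hlg1]
  -- independence of T n and t (n+1)
  have hInd : ∀ n, IndepFun (T n) (t (n+1)) μ := by
    intro n
    have h1 : (n+1) ∉ Finset.Icc 1 n := by simp
    have := hindep.indepFun_finset_sum_of_notMem hmeas h1
    rwa [← hTfun n] at this
  -- Wald term identity
  have hterm : ∀ n, (∫⁻ ω, (A n).indicator (fun ω => g (t (n+1) ω)) ω ∂μ)
      = ENNReal.ofReal (m x) * μ (A n) := by
    intro n
    have heq : (A n).indicator (fun ω => g (t (n+1) ω))
        = (fun y => (Set.Iic x).indicator (fun _ => (1:ℝ≥0∞)) y) ∘ T n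
          * (g ∘ t (n+1)) := by
      funext ω
      by_cases h : T n ω ≤ x
      · simp [Set.indicator_apply, h, hA, Set.mem_setOf_eq]
      · simp [Set.indicator_apply, h, hA, Set.mem_setOf_eq]
    rw [heq]
    have hmf : Measurable ((fun y => (Set.Iic x).indicator (fun _ => (1:ℝ≥0∞)) y) ∘ T n) :=
      (measurable_const.indicator measurableSet_Iic).comp (hTmeas n)
    have hmg : Measurable (g ∘ t (n+1)) := hgmeas.comp (hmeas (n+1))
    have hindfg : IndepFun ((fun y => (Set.Iic x).indicator (fun _ => (1:ℝ≥0∞)) y) ∘ T n)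
        (g ∘ t (n+1)) μ :=
      (hInd n).comp (measurable_const.indicator measurableSet_Iic) hgmeas
    rw [lintegral_mul_eq_lintegral_mul_lintegral_of_indepFun hmf hmg hindfg]
    have h1 : ∫⁻ ω, ((fun y => (Set.Iic x).indicator (fun _ => (1:ℝ≥0∞)) y) ∘ T n) ω ∂μ
        = μ (A n) := by
      have : ((fun y => (Set.Iic x).indicator (fun _ => (1:ℝ≥0∞)) y) ∘ T n)
          = (A n).indicator (fun _ => (1:ℝ≥0∞)) := by
        funext ω
        by_cases h : T n ω ≤ x
        · simp [Set.indicator_apply, h, hA, Set.mem_setOf_eq]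
        · simp [Set.indicator_apply, h, hA, Set.mem_setOf_eq]
      rw [this]
      exact lintegral_indicator_one (hAmeas n)
    rw [h1, mul_comm]
    simp only [Function.comp_apply]
    rw [hlg n]
  -- Tonelli
  set G : ℕ → Ω → ℝ≥0∞ := fun n => (A n).indicator (fun ω => g (t (n+1) ω)) with hG
  have hGmeas : ∀ n, Measurable (G n) :=
    fun n => (hgmeas.comp (hmeas (n+1))).indicator (hAmeas n)
  have hTon : ∫⁻ ω, (∑' n, G n ω) ∂μ = ENNReal.ofReal (m x) * ∑' n, μ (A n) := by
    rw [lintegral_tsum fun n => (hGmeas n).aemeasurable]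
    rw [← ENNReal.tsum_mul_left]
    exact tsum_congr fun n => hterm n
  -- relating ∑' μ (A n) to the statement's sum
  have hsplit : (∑' n : ℕ, μ {ω | T (n + 1) ω ≤ x}) + 1 = ∑' n, μ (A n) := by
    have hA0 : μ (A 0) = 1 := by
      have : A 0 = Set.univ := by
        ext ω
        simp [hA, hT 0 ω, hx.le]
      rw [this]; exact measure_univ
    have h1 : (∑' n : ℕ, μ (A n)) = μ (A 0) + ∑' n : ℕ, μ (A (n+1)) :=
      tsum_eq_zero_add' (f := fun n : ℕ => μ (A n)) ENNReal.summable
    rw [h1, hA0, add_comm]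
  -- pointwise bounds
  have hpt : ∀ᵐ ω ∂μ, (∑' n, G n ω) ≤ ENNReal.ofReal (2*x) ∧
      ((∃ n, x < T n ω) → ENNReal.ofReal x ≤ ∑' n, G n ω) := by
    filter_upwards [hpos'] with ω hω
    have haux := stmt16_aux x hx (fun i => t i ω) hω (fun n => T n ω) (fun n => hT n ω)
    have hGe : (∑' n, G n ω)
        = ∑' n : ℕ, if T n ω ≤ x then ENNReal.ofReal (min (t (n+1) ω) x) else 0 := by
      apply tsum_congr
      intro n
      by_cases h : T n ω ≤ x
      · simp [hG, Set.indicator_apply, h, hA, Set.mem_setOf_eq, hg]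
      · simp [hG, Set.indicator_apply, h, hA, Set.mem_setOf_eq, hg]
    rw [hGe]
    exact haux
  -- upper bound on the lintegral
  have hUB : ENNReal.ofReal (m x) * (∑' n, μ (A n)) ≤ ENNReal.ofReal (2*x) := by
    rw [← hTon]
    calc ∫⁻ ω, (∑' n, G n ω) ∂μ ≤ ∫⁻ _, ENNReal.ofReal (2*x) ∂μ :=
          lintegral_mono_ae (hpt.mono fun ω h => h.1)
      _ = ENNReal.ofReal (2*x) := by simp
  have hmx0 : ENNReal.ofReal (m x) ≠ 0 := by
    simp [ENNReal.ofReal_eq_zero, not_le, hmx_pos]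
  -- upper bound conclusion
  have hupper : (∑' n, μ (A n)) ≤ ENNReal.ofReal (2 * x / m x) := by
    rw [ENNReal.ofReal_div_of_pos hmx_pos]
    rw [ENNReal.le_div_iff_mul_le (Or.inl hmx0) (Or.inl ENNReal.ofReal_ne_top)]
    rw [mul_comm]
    exact hUB
  -- finiteness
  have hfin : (∑' n, μ (A n)) ≠ ⊤ :=
    ne_top_of_le_ne_top ENNReal.ofReal_ne_top hupper
  -- a.e. escape: ∃ n, x < T n ω a.e.
  have htend : Filter.Tendsto (fun n => μ (A n)) Filter.atTop (nhds 0) :=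
    ENNReal.tendsto_atTop_zero_of_tsum_ne_top hfin
  have hinter : μ (⋂ n, A n) = 0 := by
    have hle : ∀ n, μ (⋂ k, A k) ≤ μ (A n) := fun n => measure_mono (Set.iInter_subset _ n)
    have := ge_of_tendsto htend (Filter.Eventually.of_forall hle)
    exact le_antisymm this zero_le
  have hescape : ∀ᵐ ω ∂μ, ∃ n, x < T n ω := by
    have := (measure_eq_zero_iff_ae_notMem).1 hinter
    filter_upwards [this] with ω h
    simp only [Set.mem_iInter, not_forall] at h
    obtain ⟨n, hn⟩ := h
    exact ⟨n, not_le.1 hn⟩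
  -- lower bound on the lintegral
  have hLB : ENNReal.ofReal x ≤ ENNReal.ofReal (m x) * (∑' n, μ (A n)) := by
    rw [← hTon]
    calc ENNReal.ofReal x = ∫⁻ _, ENNReal.ofReal x ∂μ := by simp
      _ ≤ ∫⁻ ω, (∑' n, G n ω) ∂μ := by
          apply lintegral_mono_ae
          filter_upwards [hpt, hescape] with ω h1 h2
          exact h1.2 h2
  have hlower : ENNReal.ofReal (x / m x) ≤ ∑' n, μ (A n) := by
    rw [ENNReal.ofReal_div_of_pos hmx_pos]
    rw [ENNReal.div_le_iff_le_mul (Or.inl hmx0) (Or.inl ENNReal.ofReal_ne_top)]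
    rw [mul_comm]
    exact hLB
  rw [hsplit]
  exact ⟨hlower, hupper⟩
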